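/- Let H be a real Hilbert space, L : H × H → ℝ ∪ {+∞} an anti-selfdual Lagrangian, and λ > 0. Then the λ-regularization L_λ(x,p) = inf_{z∈H} { L(z,p) + ‖x−z‖²/(2λ) } + (λ/2)‖p‖² is again an anti-selfdual Lagrangian on H × H. -/

import Mathlib

open scoped RealInnerProductSpace NNReal

noncomputable section

/-- Convexity for `EReal`-valued functions. -/
def ERealConvexOn {E : Type*} [AddCommGroup E] [Module ℝ E] (f : E → EReal) : Prop :=
  ∀ x y : E, ∀ s t : ℝ, 0 ≤ s → 0 ≤ t → s + t = 1 →
    f (s • x + t • y) ≤ (s : EReal) * f x + (t : EReal) * f y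

/-- The Legendre–Fenchel dual, in both variables, of a Lagrangian on `H × H`. -/
def lagrangianDualH {H : Type*} [NormedAddCommGroup H] [InnerProductSpace ℝ H]
    (L : H × H → EReal) (q y : H) : EReal :=
  ⨆ x : H, ⨆ p : H, ((⟪q, x⟫ + ⟪y, p⟫ : ℝ) : EReal) - L (x, p)

/-- A Lagrangian on a Hilbert space is anti-selfdual if `L*(p,x) = L(−x,−p)`. -/
def IsASDH {H : Type*} [NormedAddCommGroup H] [InnerProductSpace ℝ H]
    (L : H × H → EReal) : Prop :=
  ∀ p x : H, lagrangianDualH L p x = L (-x, -p)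

/-- `(q,y) ∈ ∂L(x,p)`, the subdifferential of the Lagrangian `L` at `(x,p)`. -/
def MemSubdiff {H : Type*} [NormedAddCommGroup H] [InnerProductSpace ℝ H]
    (L : H × H → EReal) (x p q y : H) : Prop :=
  ∀ z r : H, L (x, p) + ((⟪q, z - x⟫ + ⟪y, r - p⟫ : ℝ) : EReal) ≤ L (z, r)

/-- `y ∈ ∂₂L(u,v)`, the subdifferential in the second variable. -/
def MemSubdiff2 {H : Type*} [NormedAddCommGroup H] [InnerProductSpace ℝ H]
    (L : H × H → EReal) (u v y : H) : Prop :=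
  ∀ r : H, L (u, v) + ((⟪y, r - v⟫ : ℝ) : EReal) ≤ L (u, r)

/-- `q ∈ ∂₁L(x,p)`, the subdifferential in the first variable. -/
def MemSubdiff1 {H : Type*} [NormedAddCommGroup H] [InnerProductSpace ℝ H]
    (L : H × H → EReal) (x p q : H) : Prop :=
  ∀ z : H, L (x, p) + ((⟪q, z - x⟫ : ℝ) : EReal) ≤ L (z, p)

/-- The `λ`-regularization of a Lagrangian:
`L_λ(x,p) = inf_z { L(z,p) + ‖x−z‖²/(2λ) } + (λ/2)‖p‖²`. -/
def lagReg {H : Type*} [NormedAddCommGroup H] [InnerProductSpace ℝ H]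
    (lam : ℝ) (L : H × H → EReal) (x p : H) : EReal :=
  (⨅ z : H, L (z, p) + ((‖x - z‖ ^ 2 / (2 * lam) : ℝ) : EReal))
    + ((lam / 2 * ‖p‖ ^ 2 : ℝ) : EReal)

namespace Stm9

/-! ### EReal helper lemmas -/

/-- adding a real constant is an order isomorphism of `EReal`. -/
def addCoeIso (c : ℝ) : EReal ≃o EReal where
  toFun x := x + (c : EReal)
  invFun x := x - (c : EReal)
  left_inv _ := EReal.add_sub_cancel_right
  right_inv _ := EReal.sub_add_cancel
  map_rel_iff' := (EReal.addLECancellable_coe c).add_le_add_iff_right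

lemma iSup_add_coe {ι : Sort*} (g : ι → EReal) (c : ℝ) :
    (⨆ i, g i) + (c : EReal) = ⨆ i, (g i + (c : EReal)) :=
  (addCoeIso c).map_iSup g

lemma coe_add_iSup {ι : Sort*} (c : ℝ) (g : ι → EReal) :
    (c : EReal) + ⨆ i, g i = ⨆ i, ((c : EReal) + g i) := by
  rw [add_comm, iSup_add_coe]
  simp_rw [add_comm]

lemma neg_iInf' {ι : Sort*} (g : ι → EReal) : -(⨅ i, g i) = ⨆ i, -(g i) :=
  EReal.negOrderIso.map_iInf g

lemma coe_sub_iInf {ι : Sort*} (a : ℝ) (g : ι → EReal) :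
    (a : EReal) - ⨅ i, g i = ⨆ i, ((a : EReal) - g i) := by
  rw [sub_eq_add_neg, neg_iInf', coe_add_iSup]
  simp_rw [sub_eq_add_neg]

lemma coe_sub_add_coe (a b : ℝ) (A : EReal) :
    (a : EReal) - (A + (b : EReal)) = ((a - b : ℝ) : EReal) - A := by
  induction A using EReal.rec with
  | bot => rfl
  | coe r => norm_cast; ring
  | top => simp [EReal.add_top_of_ne_bot]

lemma coe_sub_le_coe_iff (t s : ℝ) (K : EReal) :
    (t : EReal) - K ≤ (s : EReal) ↔ ((t - s : ℝ) : EReal) ≤ K := by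
  induction K using EReal.rec with
  | bot => simp [← EReal.coe_sub]
  | coe r => norm_cast; constructor <;> intro h <;> linarith
  | top => simp

lemma sup_attained {ι : Sort*} (g : ι → ℝ) (i₀ : ι) (h : ∀ i, g i ≤ g i₀) (K : EReal) :
    ⨆ i, ((g i : EReal) - K) = ((g i₀ : ℝ) : EReal) - K := by
  refine le_antisymm (iSup_le fun i => EReal.sub_le_sub (by exact_mod_cast h i) le_rfl) ?_
  exact le_iSup (fun i => ((g i : ℝ) : EReal) - K) i₀

lemma coe_add_sub (c h : ℝ) (K : EReal) :
    ((c + h : ℝ) : EReal) - K = (c : EReal) + ((h : EReal) - K) := by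
  induction K using EReal.rec with
  | bot => rw [EReal.coe_sub_bot, EReal.coe_sub_bot, EReal.coe_add_top]
  | coe r => norm_cast; ring
  | top => simp

lemma sub_le_sub_add_coe {t u c : ℝ} (h : t ≤ u + c) (K : EReal) :
    (t : EReal) - K ≤ ((u : EReal) - K) + (c : EReal) := by
  induction K using EReal.rec with
  | bot => rw [EReal.coe_sub_bot, EReal.coe_sub_bot, EReal.top_add_coe]
  | coe r => norm_cast; linarith
  | top => simp

/-! ### real helper lemmas -/

variable {H : Type*} [NormedAddCommGroup H] [InnerProductSpace ℝ H]

lemma combo_norm_sq (s t : ℝ) (h : s + t = 1) (u v : H) :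
    ‖s • u + t • v‖ ^ 2 = s * ‖u‖ ^ 2 + t * ‖v‖ ^ 2 - s * t * ‖u - v‖ ^ 2 := by
  have ht : t = 1 - s := by linarith
  subst ht
  have e1 : ‖s • u + (1 - s) • v‖ ^ 2
      = s ^ 2 * ‖u‖ ^ 2 + 2 * (s * ((1 - s) * ⟪u, v⟫)) + (1 - s) ^ 2 * ‖v‖ ^ 2 := by
    rw [norm_add_sq_real, real_inner_smul_left, real_inner_smul_right, norm_smul, norm_smul]
    simp only [Real.norm_eq_abs, mul_pow, sq_abs]
  have e2 : ‖u - v‖ ^ 2 = ‖u‖ ^ 2 - 2 * ⟪u, v⟫ + ‖v‖ ^ 2 := norm_sub_sq_real u v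
  rw [e1, e2]; ring

lemma quad_max {lam : ℝ} (hlam : 0 < lam) (q z x : H) :
    ⟪q, x⟫ - ‖x - z‖ ^ 2 / (2 * lam) ≤ ⟪q, z⟫ + lam / 2 * ‖q‖ ^ 2 := by
  have h2l : (0:ℝ) < 2 * lam := by linarith
  have h0 : (0:ℝ) ≤ ‖x - z - lam • q‖ ^ 2 := sq_nonneg _
  have he : ‖x - z - lam • q‖ ^ 2
      = ‖x - z‖ ^ 2 - 2 * (lam * ⟪x - z, q⟫) + lam ^ 2 * ‖q‖ ^ 2 := by
    rw [norm_sub_sq_real, real_inner_smul_right, norm_smul]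
    simp only [Real.norm_eq_abs, mul_pow, sq_abs]
  rw [he] at h0
  have hi : ⟪q, x⟫ - ⟪q, z⟫ = ⟪x - z, q⟫ := by
    rw [inner_sub_left, real_inner_comm x q, real_inner_comm z q]
  have hgoal : ⟪q, x⟫ - ⟪q, z⟫ - lam / 2 * ‖q‖ ^ 2 ≤ ‖x - z‖ ^ 2 / (2 * lam) := by
    rw [le_div_iff₀ h2l]; nlinarith [h0, hi]
  linarith

lemma quad_max2 {lam : ℝ} (hlam : 0 < lam) (y r p : H) :
    ⟪y, p⟫ - lam / 2 * ‖p‖ ^ 2 ≤ ⟪r, p⟫ + ‖y - r‖ ^ 2 / (2 * lam) := by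
  have h2l : (0:ℝ) < 2 * lam := by linarith
  have h0 : (0:ℝ) ≤ ‖y - r - lam • p‖ ^ 2 := sq_nonneg _
  have he : ‖y - r - lam • p‖ ^ 2
      = ‖y - r‖ ^ 2 - 2 * (lam * ⟪y - r, p⟫) + lam ^ 2 * ‖p‖ ^ 2 := by
    rw [norm_sub_sq_real, real_inner_smul_right, norm_smul]
    simp only [Real.norm_eq_abs, mul_pow, sq_abs]
  rw [he] at h0
  have hi : ⟪y - r, p⟫ = ⟪y, p⟫ - ⟪r, p⟫ := by rw [inner_sub_left]
  have hgoal : ⟪y, p⟫ - ⟪r, p⟫ - lam / 2 * ‖p‖ ^ 2 ≤ ‖y - r‖ ^ 2 / (2 * lam) := by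
    rw [le_div_iff₀ h2l]; nlinarith [h0, hi]
  linarith

end Stm9

namespace Stm9

section Key

open Filter Topology

variable {H : Type*} [NormedAddCommGroup H] [InnerProductSpace ℝ H] [CompleteSpace H]

lemma key_identity (L : H × H → EReal)
    (hconv : ERealConvexOn L)
    (hproper : ∃ z, L z ≠ ⊤) (hreal : ∀ z, L z ≠ ⊥)
    {lam : ℝ} (hlam : 0 < lam) (q y : H) :
    (⨆ p : H, ⨆ z : H, ((⟪q, z⟫ + ⟪y, p⟫ - lam / 2 * ‖p‖ ^ 2 : ℝ) : EReal) - L (z, p))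
      = ⨅ r : H, (lagrangianDualH L q r + ((‖y - r‖ ^ 2 / (2 * lam) : ℝ) : EReal)) := by
  set T : H → H → ℝ := fun z p => ⟪q, z⟫ + ⟪y, p⟫ - lam / 2 * ‖p‖ ^ 2 with hT
  set S : EReal := ⨆ p : H, ⨆ z : H, ((T z p : ℝ) : EReal) - L (z, p) with hS
  set I : EReal := ⨅ r : H, (lagrangianDualH L q r + ((‖y - r‖ ^ 2 / (2 * lam) : ℝ) : EReal))
    with hI
  have easy : S ≤ I := by
    refine le_iInf fun r => ?_
    refine iSup_le fun p => iSup_le fun z => ?_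
    have h1 : ((⟪q, z⟫ + ⟪r, p⟫ : ℝ) : EReal) - L (z, p) ≤ lagrangianDualH L q r :=
      le_trans (le_iSup (fun p' => ((⟪q, z⟫ + ⟪r, p'⟫ : ℝ) : EReal) - L (z, p')) p)
        (le_iSup (fun x => ⨆ p' : H, ((⟪q, x⟫ + ⟪r, p'⟫ : ℝ) : EReal) - L (x, p')) z)
    have h2 : ((T z p : ℝ) : EReal) - L (z, p)
        ≤ (((⟪q, z⟫ + ⟪r, p⟫ : ℝ) : EReal) - L (z, p)) + ((‖y - r‖ ^ 2 / (2 * lam) : ℝ) : EReal) := by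
      refine sub_le_sub_add_coe ?_ _
      have := quad_max2 hlam y r p
      simp only [hT]; linarith
    exact h2.trans (add_le_add h1 le_rfl)
  refine le_antisymm easy ?_
  by_cases hStop : S = ⊤
  · rw [hStop]; exact le_top
  have hSbot : S ≠ ⊥ := by
    obtain ⟨w, hw⟩ := hproper
    intro hbot
    have hterm : ((T w.1 w.2 : ℝ) : EReal) - L (w.1, w.2) ≤ S :=
      le_trans (le_iSup (fun z => ((T z w.2 : ℝ) : EReal) - L (z, w.2)) w.1)
        (le_iSup (fun p => ⨆ z : H, ((T z p : ℝ) : EReal) - L (z, p)) w.2)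
    rw [hbot, le_bot_iff] at hterm
    obtain ⟨l, hl⟩ : ∃ l : ℝ, L (w.1, w.2) = (l : EReal) :=
      ⟨(L (w.1, w.2)).toReal, (EReal.coe_toReal (by simpa using hw) (by simpa using hreal w)).symm⟩
    rw [hl, ← EReal.coe_sub] at hterm
    exact EReal.coe_ne_bot _ hterm
  set s : ℝ := S.toReal with hs
  have hScoe : S = (s : EReal) := (EReal.coe_toReal hStop hSbot).symm
  have key0 : ∀ z p : H, ((T z p - s : ℝ) : EReal) ≤ L (z, p) := by
    intro z p
    refine (coe_sub_le_coe_iff _ _ _).mp ?_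
    rw [← hScoe]
    exact le_trans (le_iSup (fun z' => ((T z' p : ℝ) : EReal) - L (z', p)) z)
      (le_iSup (fun p' => ⨆ z' : H, ((T z' p' : ℝ) : EReal) - L (z', p')) p)
  have hseq : ∀ n : ℕ, ∃ (z p : H) (l : ℝ), L (z, p) = (l : EReal) ∧
      s - 1 / ((n : ℝ) + 1) < T z p - l := by
    intro n
    have hlt : ((s - 1 / ((n : ℝ) + 1) : ℝ) : EReal) < S := by
      rw [hScoe, EReal.coe_lt_coe_iff]
      have : (0:ℝ) < 1 / ((n : ℝ) + 1) := by positivity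
      linarith
    rw [hS] at hlt
    obtain ⟨p, hp⟩ := lt_iSup_iff.mp hlt
    obtain ⟨z, hz⟩ := lt_iSup_iff.mp hp
    have hne : L (z, p) ≠ ⊤ := by
      intro h
      rw [h, EReal.sub_top] at hz
      exact absurd hz (by simp)
    obtain ⟨l, hl⟩ : ∃ l : ℝ, L (z, p) = (l : EReal) :=
      ⟨(L (z, p)).toReal, (EReal.coe_toReal hne (hreal (z, p))).symm⟩
    refine ⟨z, p, l, hl, ?_⟩
    rw [hl, ← EReal.coe_sub, EReal.coe_lt_coe_iff] at hz
    linarith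
  choose Z P l hL hlt using hseq
  have hmid : ∀ n m : ℕ, lam / 8 * ‖P n - P m‖ ^ 2
      < 1 / 2 * (1 / ((n:ℝ) + 1) + 1 / ((m:ℝ) + 1)) := by
    intro n m
    have hc2 := hconv (Z n, P n) (Z m, P m) (1/2) (1/2) (by norm_num) (by norm_num) (by norm_num)
    rw [hL n, hL m, Prod.smul_mk, Prod.smul_mk, Prod.mk_add_mk, ← EReal.coe_mul, ← EReal.coe_mul,
      ← EReal.coe_add] at hc2
    have hchain := (key0 _ _).trans hc2
    rw [EReal.coe_le_coe_iff] at hchain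
    have hTmid : T ((1/2:ℝ) • Z n + (1/2:ℝ) • Z m) ((1/2:ℝ) • P n + (1/2:ℝ) • P m)
        = 1/2 * T (Z n) (P n) + 1/2 * T (Z m) (P m) + lam / 8 * ‖P n - P m‖ ^ 2 := by
      simp only [hT]
      rw [inner_add_right, real_inner_smul_right, real_inner_smul_right,
        inner_add_right, real_inner_smul_right, real_inner_smul_right,
        combo_norm_sq (1/2) (1/2) (by norm_num) (P n) (P m)]
      ring
    rw [hTmid] at hchain
    have h5 := hlt n
    have h6 := hlt m
    linarith
  have hcauchy : CauchySeq P := by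
    rw [Metric.cauchySeq_iff']
    intro ε hε
    obtain ⟨N, hN⟩ := exists_nat_gt (8 / (lam * ε ^ 2))
    refine ⟨N, fun n hn => ?_⟩
    rw [dist_eq_norm]
    have h1 := hmid n N
    have h2 : 1 / ((n:ℝ) + 1) ≤ 1 / ((N:ℝ) + 1) := by
      apply one_div_le_one_div_of_le (by positivity)
      have : (N:ℝ) ≤ (n:ℝ) := by exact_mod_cast hn
      linarith
    have hle2 : (0:ℝ) < lam * ε ^ 2 := by positivity
    have h3 : 1 / ((N:ℝ) + 1) < lam * ε ^ 2 / 8 := by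
      rw [div_lt_div_iff₀ (by positivity) (by norm_num)]
      rw [div_lt_iff₀ hle2] at hN
      nlinarith
    have h4 : ‖P n - P N‖ ^ 2 < ε ^ 2 := by nlinarith
    exact lt_of_pow_lt_pow_left₀ 2 hε.le h4
  obtain ⟨pbar, hpbar⟩ := cauchySeq_tendsto_of_complete hcauchy
  have key1 : ∀ z p : H, ((T z p + lam / 2 * ‖p - pbar‖ ^ 2 - s : ℝ) : EReal) ≤ L (z, p) := by
    intro z p
    by_cases hLt : L (z, p) = ⊤
    · rw [hLt]; exact le_top
    obtain ⟨c, hc⟩ : ∃ c : ℝ, L (z, p) = (c : EReal) :=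
      ⟨(L (z, p)).toReal, (EReal.coe_toReal hLt (hreal (z, p))).symm⟩
    rw [hc, EReal.coe_le_coe_iff]
    have stepA : ∀ t : ℝ, 0 < t → t < 1 →
        T z p - s + lam / 2 * ((1 - t) * ‖p - pbar‖ ^ 2) ≤ c := by
      intro t ht0 ht1
      have hn : ∀ n : ℕ, T z p - s + lam / 2 * ((1 - t) * ‖P n - p‖ ^ 2)
          - (1 - t) * (1 / ((n:ℝ) + 1)) / t ≤ c := by
        intro n
        have hc2 := hconv (Z n, P n) (z, p) (1 - t) t (by linarith) (by linarith) (by ring)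
        rw [hL n, hc, Prod.smul_mk, Prod.smul_mk, Prod.mk_add_mk, ← EReal.coe_mul,
          ← EReal.coe_mul, ← EReal.coe_add] at hc2
        have hchain := (key0 _ _).trans hc2
        rw [EReal.coe_le_coe_iff] at hchain
        have hTexp : T ((1 - t) • Z n + t • z) ((1 - t) • P n + t • p)
            = (1 - t) * T (Z n) (P n) + t * T z p + lam / 2 * ((1 - t) * t * ‖P n - p‖ ^ 2) := by
          simp only [hT]
          rw [inner_add_right, real_inner_smul_right, real_inner_smul_right,
            inner_add_right, real_inner_smul_right, real_inner_smul_right,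
            combo_norm_sq (1 - t) t (by ring) (P n) p]
          ring
        rw [hTexp] at hchain
        have h5 := hlt n
        have h6 : (1 - t) * (s - 1 / ((n:ℝ) + 1)) ≤ (1 - t) * (T (Z n) (P n) - l n) :=
          mul_le_mul_of_nonneg_left (hlt n).le (by linarith)
        have hE : t * (T z p - s + lam / 2 * ((1 - t) * ‖P n - p‖ ^ 2)
              - (1 - t) * (1 / ((n:ℝ) + 1)) / t)
            = t * (T z p) - t * s + lam / 2 * ((1 - t) * t * ‖P n - p‖ ^ 2)
              - (1 - t) * (1 / ((n:ℝ) + 1)) := by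
          field_simp
        have hgoal' : t * (T z p - s + lam / 2 * ((1 - t) * ‖P n - p‖ ^ 2)
            - (1 - t) * (1 / ((n:ℝ) + 1)) / t) ≤ t * c := by
          rw [hE]; linarith
        exact le_of_mul_le_mul_left hgoal' ht0
      have htend : Tendsto (fun n : ℕ => T z p - s + lam / 2 * ((1 - t) * ‖P n - p‖ ^ 2)
          - (1 - t) * (1 / ((n:ℝ) + 1)) / t) atTop
          (𝓝 (T z p - s + lam / 2 * ((1 - t) * ‖pbar - p‖ ^ 2) - (1 - t) * 0 / t)) := by
        refine Tendsto.sub (Tendsto.add tendsto_const_nhds ?_) ?_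
        · exact Tendsto.const_mul _ (Tendsto.const_mul _
            (((hpbar.sub tendsto_const_nhds).norm).pow 2))
        · exact Tendsto.div_const (Tendsto.const_mul _ tendsto_one_div_add_atTop_nhds_zero_nat) t
      have hlimle := le_of_tendsto htend (Filter.Eventually.of_forall hn)
      have hrev : ‖pbar - p‖ = ‖p - pbar‖ := norm_sub_rev _ _
      rw [hrev] at hlimle
      simp only [mul_zero, zero_div, sub_zero] at hlimle
      linarith
    have final : ∀ ε : ℝ, 0 < ε → T z p + lam / 2 * ‖p - pbar‖ ^ 2 - s ≤ c + ε := by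
      intro ε hε
      set D := ‖p - pbar‖ ^ 2 with hD
      have hD0 : (0:ℝ) ≤ D := sq_nonneg _
      have hld : (0:ℝ) ≤ lam / 2 * D := mul_nonneg (by linarith) hD0
      have hden : (0:ℝ) < lam / 2 * D + 1 := by linarith
      set t : ℝ := min (1/2) (ε / (lam / 2 * D + 1)) with htdef
      have ht0 : 0 < t := lt_min (by norm_num) (div_pos hε hden)
      have ht1 : t < 1 := lt_of_le_of_lt (min_le_left _ _) (by norm_num)
      have h := stepA t ht0 ht1
      have htb : t * (lam / 2 * D) ≤ ε := by
        have hte : t ≤ ε / (lam / 2 * D + 1) := min_le_right _ _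
        have h1 : t * (lam / 2 * D) ≤ (ε / (lam / 2 * D + 1)) * (lam / 2 * D) :=
          mul_le_mul_of_nonneg_right hte hld
        have h2 : (ε / (lam / 2 * D + 1)) * (lam / 2 * D) ≤ ε := by
          rw [div_mul_eq_mul_div, div_le_iff₀ hden]
          nlinarith
        linarith
      have hexp : lam / 2 * ((1 - t) * D) + t * (lam / 2 * D) = lam / 2 * D := by ring
      linarith
    have := le_of_forall_pos_le_add final
    linarith
  set rbar : H := y - lam • pbar with hrbar
  have hdual : lagrangianDualH L q rbar ≤ ((s - lam / 2 * ‖pbar‖ ^ 2 : ℝ) : EReal) := by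
    refine iSup_le fun z => iSup_le fun p => ?_
    rw [coe_sub_le_coe_iff]
    have heq : ⟪q, z⟫ + ⟪rbar, p⟫ - (s - lam / 2 * ‖pbar‖ ^ 2)
        = T z p + lam / 2 * ‖p - pbar‖ ^ 2 - s := by
      simp only [hT, hrbar]
      rw [inner_sub_left, real_inner_smul_left, norm_sub_sq_real, real_inner_comm pbar p]
      ring
    rw [heq]
    exact key1 z p
  have h1 : I ≤ lagrangianDualH L q rbar + ((‖y - rbar‖ ^ 2 / (2 * lam) : ℝ) : EReal) :=
    iInf_le _ rbar
  have hnorm : ‖y - rbar‖ ^ 2 / (2 * lam) = lam / 2 * ‖pbar‖ ^ 2 := by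
    have hyr : y - rbar = lam • pbar := by simp [hrbar]
    rw [hyr, norm_smul]
    simp only [Real.norm_eq_abs, mul_pow, sq_abs]
    field_simp
  rw [hnorm] at h1
  refine h1.trans ?_
  refine le_trans (add_le_add hdual le_rfl) ?_
  rw [← EReal.coe_add, hScoe, EReal.coe_le_coe_iff]
  linarith

end Key

end Stm9

namespace Stm9

variable {H : Type*} [NormedAddCommGroup H] [InnerProductSpace ℝ H]

lemma step1 (L : H × H → EReal) {lam : ℝ} (hlam : 0 < lam) (q y : H) :
    lagrangianDualH (fun zp : H × H => lagReg lam L zp.1 zp.2) q y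
      = ((lam / 2 * ‖q‖ ^ 2 : ℝ) : EReal)
        + ⨆ p : H, ⨆ z : H, ((⟪q, z⟫ + ⟪y, p⟫ - lam / 2 * ‖p‖ ^ 2 : ℝ) : EReal) - L (z, p) := by
  simp only [lagrangianDualH, lagReg]
  have h1 : ∀ x p : H,
      ((⟪q, x⟫ + ⟪y, p⟫ : ℝ) : EReal)
          - ((⨅ z : H, L (z, p) + ((‖x - z‖ ^ 2 / (2 * lam) : ℝ) : EReal))
            + ((lam / 2 * ‖p‖ ^ 2 : ℝ) : EReal))
        = ⨆ z : H, ((⟪q, x⟫ + ⟪y, p⟫ - lam / 2 * ‖p‖ ^ 2 - ‖x - z‖ ^ 2 / (2 * lam) : ℝ) : EReal)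
            - L (z, p) := by
    intro x p
    rw [coe_sub_add_coe, coe_sub_iInf]
    exact iSup_congr fun z => coe_sub_add_coe _ _ _
  have h2 : ∀ p z : H,
      (⨆ x : H, ((⟪q, x⟫ + ⟪y, p⟫ - lam / 2 * ‖p‖ ^ 2 - ‖x - z‖ ^ 2 / (2 * lam) : ℝ) : EReal)
          - L (z, p))
        = ((lam / 2 * ‖q‖ ^ 2 : ℝ) : EReal)
          + (((⟪q, z⟫ + ⟪y, p⟫ - lam / 2 * ‖p‖ ^ 2 : ℝ) : EReal) - L (z, p)) := by
    intro p z
    have hval : ⟪q, z + lam • q⟫ + ⟪y, p⟫ - lam / 2 * ‖p‖ ^ 2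
          - ‖z + lam • q - z‖ ^ 2 / (2 * lam)
        = lam / 2 * ‖q‖ ^ 2 + (⟪q, z⟫ + ⟪y, p⟫ - lam / 2 * ‖p‖ ^ 2) := by
      have ha : ⟪q, z + lam • q⟫ = ⟪q, z⟫ + lam * ‖q‖ ^ 2 := by
        rw [inner_add_right, real_inner_smul_right, real_inner_self_eq_norm_sq]
      have hb : ‖z + lam • q - z‖ ^ 2 = lam ^ 2 * ‖q‖ ^ 2 := by
        rw [add_sub_cancel_left, norm_smul]
        simp only [Real.norm_eq_abs, mul_pow, sq_abs]
      rw [ha, hb]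
      field_simp
      ring
    have hmax : ∀ x : H, ⟪q, x⟫ + ⟪y, p⟫ - lam / 2 * ‖p‖ ^ 2 - ‖x - z‖ ^ 2 / (2 * lam)
        ≤ ⟪q, z + lam • q⟫ + ⟪y, p⟫ - lam / 2 * ‖p‖ ^ 2 - ‖z + lam • q - z‖ ^ 2 / (2 * lam) := by
      intro x
      rw [hval]
      have := quad_max hlam q z x
      linarith
    rw [sup_attained (fun x => ⟪q, x⟫ + ⟪y, p⟫ - lam / 2 * ‖p‖ ^ 2 - ‖x - z‖ ^ 2 / (2 * lam))
      (z + lam • q) hmax (L (z, p)), hval, coe_add_sub]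
  calc (⨆ x : H, ⨆ p : H, ((⟪q, x⟫ + ⟪y, p⟫ : ℝ) : EReal)
          - ((⨅ z : H, L (z, p) + ((‖x - z‖ ^ 2 / (2 * lam) : ℝ) : EReal))
            + ((lam / 2 * ‖p‖ ^ 2 : ℝ) : EReal)))
      = ⨆ x : H, ⨆ p : H, ⨆ z : H,
          ((⟪q, x⟫ + ⟪y, p⟫ - lam / 2 * ‖p‖ ^ 2 - ‖x - z‖ ^ 2 / (2 * lam) : ℝ) : EReal)
            - L (z, p) := iSup_congr fun x => iSup_congr fun p => h1 x p
    _ = ⨆ p : H, ⨆ x : H, ⨆ z : H,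
          ((⟪q, x⟫ + ⟪y, p⟫ - lam / 2 * ‖p‖ ^ 2 - ‖x - z‖ ^ 2 / (2 * lam) : ℝ) : EReal)
            - L (z, p) := iSup_comm
    _ = ⨆ p : H, ⨆ z : H, ⨆ x : H,
          ((⟪q, x⟫ + ⟪y, p⟫ - lam / 2 * ‖p‖ ^ 2 - ‖x - z‖ ^ 2 / (2 * lam) : ℝ) : EReal)
            - L (z, p) := iSup_congr fun p => iSup_comm
    _ = ⨆ p : H, ⨆ z : H, (((lam / 2 * ‖q‖ ^ 2 : ℝ) : EReal)
          + (((⟪q, z⟫ + ⟪y, p⟫ - lam / 2 * ‖p‖ ^ 2 : ℝ) : EReal) - L (z, p))) :=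
        iSup_congr fun p => iSup_congr fun z => h2 p z
    _ = ((lam / 2 * ‖q‖ ^ 2 : ℝ) : EReal)
          + ⨆ p : H, ⨆ z : H, ((⟪q, z⟫ + ⟪y, p⟫ - lam / 2 * ‖p‖ ^ 2 : ℝ) : EReal) - L (z, p) := by
        rw [coe_add_iSup]
        exact iSup_congr fun p => (coe_add_iSup _ _).symm

lemma step2 (L : H × H → EReal) (hASD : IsASDH L) (lam : ℝ) (q y : H) :
    lagReg lam L (-y) (-q)
      = (⨅ r : H, (lagrangianDualH L q r + ((‖y - r‖ ^ 2 / (2 * lam) : ℝ) : EReal)))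
        + ((lam / 2 * ‖q‖ ^ 2 : ℝ) : EReal) := by
  simp only [lagReg]
  congr 1
  · rw [← Equiv.iInf_comp (Equiv.neg H)
      (g := fun z => L (z, -q) + ((‖-y - z‖ ^ 2 / (2 * lam) : ℝ) : EReal))]
    refine iInf_congr fun r => ?_
    simp only [Equiv.neg_apply]
    rw [← hASD q r]
    have hn : -y - -r = -(y - r) := by abel
    rw [hn, norm_neg]
  · rw [norm_neg]

end Stm9

/-- the `λ`-regularization of an anti-selfdual Lagrangian is anti-selfdual. -/
theorem stmt9 {H : Type*} [NormedAddCommGroup H] [InnerProductSpace ℝ H] [CompleteSpace H]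
    (L : H × H → EReal)
    (hconv : ERealConvexOn L)
    (hlsc : LowerSemicontinuous L)
    (hproper : ∃ z, L z ≠ ⊤) (hreal : ∀ z, L z ≠ ⊥)
    (hASD : IsASDH L)
    (lam : ℝ) (hlam : 0 < lam) :
    IsASDH (fun zp : H × H => lagReg lam L zp.1 zp.2) := by
  intro q y
  show lagrangianDualH (fun zp : H × H => lagReg lam L zp.1 zp.2) q y
      = lagReg lam L (-y) (-q)
  rw [Stm9.step1 L hlam q y, Stm9.step2 L hASD lam q y,
    ← Stm9.key_identity L hconv hproper hreal hlam q y, add_comm]
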